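/- For any two words v and w over S, one has vS ∩ wS = (ww⁻¹v)S, where ww⁻¹v is the concatenation of w, its reversed-inverted word w⁻¹, and v. -/

import Mathlib

/-- The action of a word over `S` (a list of pairs `(p, ε)` with `p ∈ S` and
`ε ∈ {+1, −1}` encoded as a `Bool`) on subsets of `S`:
`p^{+1} X = {p x : x ∈ X}` and `p^{−1} X = {q ∈ S : p q ∈ X}`. -/
def wordAct {G : Type*} [Group G] (S : Set G) : List (G × Bool) → Set G → Set G
  | [], X => X
  | l :: w, X =>
    if l.2 then (fun x => l.1 * x) '' wordAct S w X
    else {q | q ∈ S ∧ l.1 * q ∈ wordAct S w X}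

/-- The reversed-inverted word `w⁻¹ = (pₙ^{−εₙ}, …, p₁^{−ε₁})`. -/
def wordInv {G : Type*} (w : List (G × Bool)) : List (G × Bool) :=
  (w.map fun l => (l.1, !l.2)).reverse

theorem wordAct_append {G : Type*} [Group G] (S : Set G) (a b : List (G × Bool)) (X : Set G) :
    wordAct S (a ++ b) X = wordAct S a (wordAct S b X) := by
  induction a with
  | nil => rfl
  | cons l a ih => simp only [List.cons_append, wordAct, List.append_eq, ih]

theorem wordAct_subset {G : Type*} [Group G] (S : Submonoid G) (w : List (G × Bool))
    (hw : ∀ l ∈ w, l.1 ∈ S) (X : Set G) (hX : X ⊆ S) :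
    wordAct (S : Set G) w X ⊆ S := by
  induction w with
  | nil => exact hX
  | cons l w ih =>
    have hl : l.1 ∈ S := hw l List.mem_cons_self
    have ih' := ih (fun l hl' => hw l (List.mem_cons_of_mem _ hl'))
    obtain ⟨p, ε⟩ := l
    cases ε with
    | false => intro x hx; exact hx.1
    | true =>
      rintro x ⟨y, hy, rfl⟩
      exact S.mul_mem hl (ih' hy)

theorem wordAct_inv_key {G : Type*} [Group G] (S : Submonoid G) (w : List (G × Bool))
    (hw : ∀ l ∈ w, l.1 ∈ S) (Y : Set G) (hY : Y ⊆ S) :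
    wordAct (S : Set G) w (wordAct (S : Set G) (wordInv w) Y) =
      wordAct (S : Set G) w S ∩ Y := by
  induction w generalizing Y with
  | nil =>
    simp only [wordAct, wordInv, List.map_nil, List.reverse_nil]
    exact (Set.inter_eq_right.mpr hY).symm
  | cons l w ih =>
    obtain ⟨p, ε⟩ := l
    have hp : p ∈ S := hw _ List.mem_cons_self
    have hw' : ∀ l ∈ w, l.1 ∈ S := fun l h => hw l (List.mem_cons_of_mem _ h)
    have hinv : wordInv ((p, ε) :: w) = wordInv w ++ [(p, !ε)] := by
      simp [wordInv]
    have hwS : wordAct (S : Set G) w (S : Set G) ⊆ S :=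
      wordAct_subset S w hw' _ le_rfl
    rw [hinv, wordAct_append]
    cases ε with
    | false =>
      -- inverse letter is (p, true): wordAct S [(p,true)] Y = p '' Y
      have h1 : wordAct (S : Set G) [(p, true)] Y = (fun x => p * x) '' Y := by
        simp [wordAct]
      have hpY : (fun x => p * x) '' Y ⊆ (S : Set G) := by
        rintro _ ⟨y, hy, rfl⟩; exact S.mul_mem hp (hY hy)
      rw [Bool.not_false, h1]
      show wordAct (S : Set G) ((p, false) :: w) _ = _
      simp only [wordAct, if_neg (by simp : ¬(false = true))]
      rw [ih hw' _ hpY]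
      ext q
      simp only [Set.mem_setOf_eq, Set.mem_inter_iff]
      constructor
      · rintro ⟨hq, hpq, y, hy, hpy⟩
        have : q = y := by exact mul_left_cancel hpy.symm
        exact ⟨⟨hq, hpq⟩, this ▸ hy⟩
      · rintro ⟨⟨hq, hpq⟩, hqY⟩
        exact ⟨hq, hpq, q, hqY, rfl⟩
    | true =>
      -- inverse letter is (p, false)
      have h1 : wordAct (S : Set G) [(p, false)] Y = {q | q ∈ (S : Set G) ∧ p * q ∈ Y} := by
        simp [wordAct]
      have hZ : {q | q ∈ (S : Set G) ∧ p * q ∈ Y} ⊆ (S : Set G) := fun q hq => hq.1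
      rw [Bool.not_true, h1]
      show wordAct (S : Set G) ((p, true) :: w) _ = _
      simp only [wordAct, if_pos rfl]
      rw [ih hw' _ hZ]
      ext x
      simp only [Set.mem_image, Set.mem_inter_iff, Set.mem_setOf_eq]
      constructor
      · rintro ⟨q, ⟨hqw, _, hpqY⟩, rfl⟩
        exact ⟨⟨q, hqw, rfl⟩, hpqY⟩
      · rintro ⟨⟨q, hqw, rfl⟩, hxY⟩
        exact ⟨q, ⟨hqw, hwS hqw, hxY⟩, rfl⟩

/-- For any two words `v` and `w` over `S`, one has `vS ∩ wS = (ww⁻¹v)S`, where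
`ww⁻¹v` is the concatenation of `w`, its reversed-inverted word `w⁻¹`, and `v`. -/
theorem word_inter_act {G : Type*} [Group G] (S : Submonoid G)
    (v w : List (G × Bool)) (hv : ∀ l ∈ v, l.1 ∈ S) (hw : ∀ l ∈ w, l.1 ∈ S) :
    wordAct (S : Set G) v (S : Set G) ∩ wordAct (S : Set G) w (S : Set G) =
      wordAct (S : Set G) (w ++ wordInv w ++ v) (S : Set G) := by
  rw [wordAct_append, wordAct_append,
    wordAct_inv_key S w hw _ (wordAct_subset S v hv _ le_rfl), Set.inter_comm]
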